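/- (Proposition 3.1, intertwining form) Let β ∈ ℝ. For every p ∈ MvPolynomial (Fin 2) ℝ, 𝔇(E₂ p) = E₂(𝔇' p), where 𝔇 = (x∂x − ∂x²) + (y∂y − ∂y²) − 2β ∂x∂y and 𝔇' = x∂x + y∂y − 2β ∂x∂y. Equivalently, conjugation of 𝔇 by e^{(∂x²+∂y²)/2} reduces it to 𝔇'. -/

import Mathlib

open MvPolynomial Finset

/-- The operator `e^{−(∂x² + ∂y²)/2}` on bivariate polynomials: the finite double sum
`E₂ p = Σ_j Σ_k ((−1)^j/(2^j j!)) ((−1)^k/(2^k k!)) ∂x^{2j} ∂y^{2k} p`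
with both sums running up to the total degree of `p`. -/
noncomputable def expNegHalfLap (p : MvPolynomial (Fin 2) ℝ) : MvPolynomial (Fin 2) ℝ :=
  ∑ j ∈ range (p.totalDegree + 1), ∑ k ∈ range (p.totalDegree + 1),
    (((-1 : ℝ) ^ j / (2 ^ j * (j.factorial : ℝ))) *
        ((-1 : ℝ) ^ k / (2 ^ k * (k.factorial : ℝ)))) •
      (⇑(pderiv (0 : Fin 2)))^[2 * j] ((⇑(pderiv (1 : Fin 2)))^[2 * k] p)

abbrev P2 := MvPolynomial (Fin 2) ℝ

lemma iter_add (i : Fin 2) (m : ℕ) (a b : P2) :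
    (⇑(pderiv i))^[m] (a + b) = (⇑(pderiv i))^[m] a + (⇑(pderiv i))^[m] b := by
  induction m generalizing a b with
  | zero => simp
  | succ m ih => simp [Function.iterate_succ_apply, ih]

lemma iter_zero (i : Fin 2) (m : ℕ) : (⇑(pderiv i))^[m] (0 : P2) = 0 := by
  induction m with
  | zero => simp
  | succ m ih => simp [Function.iterate_succ_apply, ih]

lemma iter_sum {α : Type*} (i : Fin 2) (m : ℕ) (s : Finset α) (f : α → P2) :
    (⇑(pderiv i))^[m] (∑ x ∈ s, f x) = ∑ x ∈ s, (⇑(pderiv i))^[m] (f x) := by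
  classical
  induction s using Finset.induction_on with
  | empty => simp [iter_zero]
  | insert _ _ h ih => simp [Finset.sum_insert h, iter_add, ih]


lemma deg_pderiv (i : Fin 2) (q : P2) (d : ℕ) (h : q.totalDegree ≤ d + 1) :
    (pderiv i q).totalDegree ≤ d := by
  conv_lhs => rw [← support_sum_monomial_coeff q]
  rw [map_sum]
  apply totalDegree_finsetSum_le
  intro s hs
  rw [pderiv_monomial]
  by_cases h0 : s i = 0
  · simp [h0]
  · refine (totalDegree_monomial_le _ _).trans ?_
    have hone : Finsupp.single i 1 ≤ s := by
      rw [Finsupp.single_le_iff]; omega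
    have hsplit : s - Finsupp.single i 1 + Finsupp.single i 1 = s :=
      tsub_add_cancel_of_le hone
    have hsum : ((s - Finsupp.single i 1).sum fun _ e => e) + 1 = s.sum fun _ e => e := by
      conv_rhs => rw [← hsplit]
      rw [Finsupp.sum_add_index' (fun _ => rfl) (fun _ _ _ => rfl)]
      simp
    have hs' : (s.sum fun _ e => e) ≤ d + 1 := (le_totalDegree hs).trans h
    simp only [Function.id_def]
    omega

lemma deg_iter (i : Fin 2) (m : ℕ) (q : P2) :
    ((⇑(pderiv i))^[m] q).totalDegree ≤ q.totalDegree := by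
  induction m generalizing q with
  | zero => simp
  | succ m ih =>
    rw [Function.iterate_succ_apply]
    exact (ih _).trans (deg_pderiv i q q.totalDegree (by omega))

lemma pderiv_of_deg_zero (i : Fin 2) (q : P2) (h : q.totalDegree = 0) :
    pderiv i q = 0 := by
  conv_lhs => rw [← support_sum_monomial_coeff q]
  rw [map_sum]
  apply Finset.sum_eq_zero
  intro s hs
  rw [pderiv_monomial]
  have := (totalDegree_eq_zero_iff _ q).mp h s hs i
  simp [this]

lemma iter_vanish (i : Fin 2) (m : ℕ) (q : P2) (h : q.totalDegree < m) :
    (⇑(pderiv i))^[m] q = 0 := by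
  induction m generalizing q with
  | zero => omega
  | succ m ih =>
    rw [Function.iterate_succ_apply]
    rcases Nat.eq_zero_or_pos m with hm | hm
    · subst hm
      simp [pderiv_of_deg_zero i q (by omega)]
    · have := deg_pderiv i q (m - 1) (by omega)
      exact ih _ (by omega)


lemma pderiv_comm' (i j : Fin 2) (p : MvPolynomial (Fin 2) ℝ) :
    pderiv i (pderiv j p) = pderiv j (pderiv i p) := by
  induction p using MvPolynomial.induction_on with
  | C a => simp
  | add p q hp hq => simp [hp, hq]
  | mul_X p n hp =>
      simp only [pderiv_mul, pderiv_X, hp, Pi.single_apply]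
      split_ifs <;> simp_all [Pi.single_apply] <;> ring

lemma pderiv_iter_comm (i j : Fin 2) (m : ℕ) (q : P2) :
    pderiv i ((⇑(pderiv j))^[m] q) = (⇑(pderiv j))^[m] (pderiv i q) := by
  induction m generalizing q with
  | zero => simp
  | succ m ih =>
    rw [Function.iterate_succ_apply, ih, ← pderiv_comm', Function.iterate_succ_apply]

-- Lemma A : iterate of pderiv i on X i * pderiv i r
lemma iterA (i : Fin 2) (m : ℕ) (r : P2) :
    (⇑(pderiv i))^[m] (X i * pderiv i r) =
      X i * (⇑(pderiv i))^[m+1] r + (m : ℝ) • (⇑(pderiv i))^[m] r := by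
  induction m generalizing r with
  | zero => simp
  | succ m ih =>
    rw [Function.iterate_succ_apply]
    have hstep : pderiv i (X i * pderiv i r) =
        pderiv i r + X i * pderiv i (pderiv i r) := by
      simp [pderiv_mul]; ring
    rw [hstep]
    rw [iter_add, ih (pderiv i r)]
    have e1 : (⇑(pderiv i))^[m+1] (pderiv i r) = (⇑(pderiv i))^[m+1+1] r := by
      simp [Function.iterate_succ_apply]
    have e2 : (⇑(pderiv i))^[m] (pderiv i r) = (⇑(pderiv i))^[m+1] r :=
      (Function.iterate_succ_apply _ _ _).symm
    rw [e1, e2]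
    push_cast
    module

-- Lemma B : pderiv i iterate passes through X j for j ≠ i
lemma iterB (i j : Fin 2) (h : j ≠ i) (m : ℕ) (s : P2) :
    (⇑(pderiv i))^[m] (X j * s) = X j * (⇑(pderiv i))^[m] s := by
  induction m generalizing s with
  | zero => simp
  | succ m ih =>
    rw [Function.iterate_succ_apply, Function.iterate_succ_apply]
    rw [show pderiv i (X j * s) = X j * pderiv i s by
      simp [pderiv_mul, pderiv_X_of_ne h], ih]

noncomputable def cc (j : ℕ) : ℝ := (-1) ^ j / (2 ^ j * (j.factorial : ℝ))

lemma cc_succ (j : ℕ) : cc j = -(2 * ((j : ℝ) + 1)) * cc (j + 1) := by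
  unfold cc
  rw [pow_succ, pow_succ, Nat.factorial_succ]
  have h1 : ((2:ℝ) ^ j) ≠ 0 := by positivity
  have h2 : ((j.factorial : ℝ)) ≠ 0 := by positivity
  push_cast
  field_simp

lemma iter_iter_comm (i l : Fin 2) (m n : ℕ) (q : P2) :
    (⇑(pderiv i))^[m] ((⇑(pderiv l))^[n] q) = (⇑(pderiv l))^[n] ((⇑(pderiv i))^[m] q) := by
  induction m generalizing q with
  | zero => simp
  | succ m ih =>
    rw [Function.iterate_succ_apply', ih, pderiv_iter_comm]
    rw [← Function.iterate_succ_apply' (⇑(pderiv i)) m q]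

lemma telescope (i : Fin 2) (N : ℕ) (t : ℝ) (q : P2) (hq : q.totalDegree < 2 * N) :
    ∑ j ∈ range N, (cc j * t) • (⇑(pderiv i))^[2*j+2] q
      = ∑ j ∈ range N, (-(2*(j:ℝ)) * (cc j * t)) • (⇑(pderiv i))^[2*j] q := by
  set f : ℕ → P2 := fun j => (-(2*(j:ℝ)) * (cc j * t)) • (⇑(pderiv i))^[2*j] q with hf
  have key : ∀ j, (cc j * t) • (⇑(pderiv i))^[2*j+2] q = f (j+1) := by
    intro j
    have h2 : 2*j+2 = 2*(j+1) := by ring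
    rw [hf, h2]
    congr 1
    rw [cc_succ j]
    push_cast
    ring
  calc ∑ j ∈ range N, (cc j * t) • (⇑(pderiv i))^[2*j+2] q
      = ∑ j ∈ range N, f (j+1) := by simp_rw [key]
    _ = ∑ j ∈ range (N+1), f j - f 0 := by
        rw [Finset.sum_range_succ' f N]; ring
    _ = ∑ j ∈ range N, f j := by
        rw [Finset.sum_range_succ f N]
        have hfN : f N = 0 := by
          rw [hf]; simp [iter_vanish i (2*N) q hq]
        have hf0 : f 0 = 0 := by
          rw [hf]; norm_num
        rw [hfN, hf0]; ring

noncomputable def FF (N : ℕ) (p : P2) : P2 :=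
  ∑ j ∈ range N, ∑ k ∈ range N,
    (cc j * cc k) • (⇑(pderiv (0 : Fin 2)))^[2*j] ((⇑(pderiv (1 : Fin 2)))^[2*k] p)

lemma iter_smul (i : Fin 2) (m : ℕ) (r : ℝ) (a : P2) :
    (⇑(pderiv i))^[m] (r • a) = r • (⇑(pderiv i))^[m] a := by
  induction m generalizing a with
  | zero => simp
  | succ m ih => simp [Function.iterate_succ_apply, ih]

lemma FF_add (N : ℕ) (a b : P2) : FF N (a + b) = FF N a + FF N b := by
  unfold FF
  rw [← Finset.sum_add_distrib]
  refine sum_congr rfl fun j _ => ?_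
  rw [← Finset.sum_add_distrib]
  refine sum_congr rfl fun k _ => ?_
  rw [iter_add, iter_add, smul_add]

lemma FF_smul (N : ℕ) (r : ℝ) (a : P2) : FF N (r • a) = r • FF N a := by
  unfold FF
  rw [Finset.smul_sum]
  refine sum_congr rfl fun j _ => ?_
  rw [Finset.smul_sum]
  refine sum_congr rfl fun k _ => ?_
  rw [iter_smul, iter_smul, smul_comm]

lemma FF_sub (N : ℕ) (a b : P2) : FF N (a - b) = FF N a - FF N b := by
  have := FF_add N (a - b) b
  rw [sub_add_cancel] at this
  rw [this]; ring

lemma FF_pderiv (N : ℕ) (i : Fin 2) (p : P2) :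
    pderiv i (FF N p) = FF N (pderiv i p) := by
  unfold FF
  rw [map_sum]
  refine sum_congr rfl fun j _ => ?_
  rw [map_sum]
  refine sum_congr rfl fun k _ => ?_
  rw [Derivation.map_smul, pderiv_iter_comm, pderiv_iter_comm]

lemma FF_stable (M N : ℕ) (p : P2) (h : p.totalDegree < M) (h2 : M ≤ N) :
    FF N p = FF M p := by
  unfold FF
  have hsub : range M ⊆ range N := Finset.range_subset_range.mpr h2
  have inner : ∀ j : ℕ, (∑ k ∈ range M,
        (cc j * cc k) • (⇑(pderiv (0:Fin 2)))^[2*j] ((⇑(pderiv (1:Fin 2)))^[2*k] p))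
      = ∑ k ∈ range N,
        (cc j * cc k) • (⇑(pderiv (0:Fin 2)))^[2*j] ((⇑(pderiv (1:Fin 2)))^[2*k] p) := by
    intro j
    refine Finset.sum_subset hsub fun k _ hk => ?_
    rw [Finset.mem_range, not_lt] at hk
    rw [iter_vanish 1 (2*k) p (by omega), iter_zero, smul_zero]
  rw [← Finset.sum_subset hsub ?_]
  · exact Finset.sum_congr rfl fun j _ => (inner j).symm
  · intro j _ hj
    rw [Finset.mem_range, not_lt] at hj
    refine Finset.sum_eq_zero fun k _ => ?_
    have h1 : ((⇑(pderiv (1:Fin 2)))^[2*k] p).totalDegree ≤ p.totalDegree :=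
      deg_iter 1 (2*k) p
    rw [iter_vanish 0 (2*j) _ (by omega), smul_zero]

lemma K1 (N : ℕ) (p : P2) (hp : p.totalDegree < N) :
    X 0 * FF N (pderiv 0 p) - FF N (pderiv 0 (pderiv 0 p)) = FF N (X 0 * pderiv 0 p) := by
  have hR : FF N (X 0 * pderiv 0 p) =
      (∑ j ∈ range N, ∑ k ∈ range N, (cc j * cc k) •
        (X 0 * (⇑(pderiv (0:Fin 2)))^[2*j+1] ((⇑(pderiv (1:Fin 2)))^[2*k] p)))
      + ∑ j ∈ range N, ∑ k ∈ range N, ((2*(j:ℝ)) * (cc j * cc k)) •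
        (⇑(pderiv (0:Fin 2)))^[2*j] ((⇑(pderiv (1:Fin 2)))^[2*k] p) := by
    unfold FF
    rw [← Finset.sum_add_distrib]
    refine sum_congr rfl fun j _ => ?_
    rw [← Finset.sum_add_distrib]
    refine sum_congr rfl fun k _ => ?_
    rw [iterB 1 0 (by decide), ← pderiv_iter_comm, iterA 0 (2*j), smul_add, smul_smul]
    congr 1
    congr 1
    push_cast
    ring
  have hL1 : X 0 * FF N (pderiv 0 p) =
      ∑ j ∈ range N, ∑ k ∈ range N, (cc j * cc k) •
        (X 0 * (⇑(pderiv (0:Fin 2)))^[2*j+1] ((⇑(pderiv (1:Fin 2)))^[2*k] p)) := by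
    unfold FF
    rw [Finset.mul_sum]
    refine sum_congr rfl fun j _ => ?_
    rw [Finset.mul_sum]
    refine sum_congr rfl fun k _ => ?_
    rw [mul_smul_comm, ← pderiv_iter_comm, ← Function.iterate_succ_apply]
  have hL2 : FF N (pderiv 0 (pderiv 0 p)) =
      ∑ j ∈ range N, ∑ k ∈ range N, (-(2*(j:ℝ)) * (cc j * cc k)) •
        (⇑(pderiv (0:Fin 2)))^[2*j] ((⇑(pderiv (1:Fin 2)))^[2*k] p) := by
    unfold FF
    have step1 : ∀ j k : ℕ,
        (cc j * cc k) • (⇑(pderiv (0:Fin 2)))^[2*j]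
            ((⇑(pderiv (1:Fin 2)))^[2*k] (pderiv 0 (pderiv 0 p)))
        = (cc j * cc k) • (⇑(pderiv (0:Fin 2)))^[2*j+2]
            ((⇑(pderiv (1:Fin 2)))^[2*k] p) := by
      intro j k
      congr 1
      have h1 : (⇑(pderiv (1:Fin 2)))^[2*k] ((pderiv 0) ((pderiv 0) p))
          = (pderiv (0:Fin 2)) ((pderiv (0:Fin 2)) ((⇑(pderiv (1:Fin 2)))^[2*k] p)) := by
        rw [← pderiv_iter_comm, ← pderiv_iter_comm]
      rw [h1]
      have h2 : (pderiv (0:Fin 2)) ((pderiv (0:Fin 2)) ((⇑(pderiv (1:Fin 2)))^[2*k] p))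
          = (⇑(pderiv (0:Fin 2)))^[2] ((⇑(pderiv (1:Fin 2)))^[2*k] p) := by
        simp [Function.iterate_succ_apply']
      rw [h2, ← Function.iterate_add_apply]

    simp_rw [step1]
    rw [Finset.sum_comm]
    conv_rhs => rw [Finset.sum_comm]
    refine sum_congr rfl fun k _ => ?_
    have hdeg : ((⇑(pderiv (1:Fin 2)))^[2*k] p).totalDegree < 2*N := by
      have := deg_iter 1 (2*k) p; omega
    exact telescope 0 N (cc k) _ hdeg
  rw [hR, hL1, hL2]
  have : ∀ j ∈ range N, ∀ k ∈ range N, (-(2*(j:ℝ)) * (cc j * cc k)) •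
        (⇑(pderiv (0:Fin 2)))^[2*j] ((⇑(pderiv (1:Fin 2)))^[2*k] p)
      = -(((2*(j:ℝ)) * (cc j * cc k)) •
        (⇑(pderiv (0:Fin 2)))^[2*j] ((⇑(pderiv (1:Fin 2)))^[2*k] p)) := by
    intro j _ k _
    rw [neg_mul, neg_smul]
  rw [Finset.sum_congr rfl fun j hj => Finset.sum_congr rfl fun k hk => this j hj k hk]
  simp only [Finset.sum_neg_distrib]
  ring

lemma K2 (N : ℕ) (p : P2) (hp : p.totalDegree < N) :
    X 1 * FF N (pderiv 1 p) - FF N (pderiv 1 (pderiv 1 p)) = FF N (X 1 * pderiv 1 p) := by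
  have hR : FF N (X 1 * pderiv 1 p) =
      (∑ j ∈ range N, ∑ k ∈ range N, (cc j * cc k) •
        (X 1 * (⇑(pderiv (0:Fin 2)))^[2*j] ((⇑(pderiv (1:Fin 2)))^[2*k+1] p)))
      + ∑ j ∈ range N, ∑ k ∈ range N, ((2*(k:ℝ)) * (cc j * cc k)) •
        (⇑(pderiv (0:Fin 2)))^[2*j] ((⇑(pderiv (1:Fin 2)))^[2*k] p) := by
    unfold FF
    rw [← Finset.sum_add_distrib]
    refine sum_congr rfl fun j _ => ?_
    rw [← Finset.sum_add_distrib]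
    refine sum_congr rfl fun k _ => ?_
    rw [iterA 1 (2*k), iter_add, iterB 0 1 (by decide), iter_smul, smul_add, smul_smul]
    congr 1
    congr 1
    push_cast
    ring
  have hL1 : X 1 * FF N (pderiv 1 p) =
      ∑ j ∈ range N, ∑ k ∈ range N, (cc j * cc k) •
        (X 1 * (⇑(pderiv (0:Fin 2)))^[2*j] ((⇑(pderiv (1:Fin 2)))^[2*k+1] p)) := by
    unfold FF
    rw [Finset.mul_sum]
    refine sum_congr rfl fun j _ => ?_
    rw [Finset.mul_sum]
    refine sum_congr rfl fun k _ => ?_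
    rw [mul_smul_comm, ← Function.iterate_succ_apply]
  have hL2 : FF N (pderiv 1 (pderiv 1 p)) =
      ∑ j ∈ range N, ∑ k ∈ range N, (-(2*(k:ℝ)) * (cc j * cc k)) •
        (⇑(pderiv (0:Fin 2)))^[2*j] ((⇑(pderiv (1:Fin 2)))^[2*k] p) := by
    unfold FF
    have step1 : ∀ j k : ℕ,
        (cc j * cc k) • (⇑(pderiv (0:Fin 2)))^[2*j]
            ((⇑(pderiv (1:Fin 2)))^[2*k] (pderiv 1 (pderiv 1 p)))
        = (cc k * cc j) • (⇑(pderiv (1:Fin 2)))^[2*k+2]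
            ((⇑(pderiv (0:Fin 2)))^[2*j] p) := by
      intro j k
      rw [mul_comm (cc j) (cc k)]
      congr 1
      have h2 : (pderiv (1:Fin 2)) ((pderiv (1:Fin 2)) p)
          = (⇑(pderiv (1:Fin 2)))^[2] p := by
        simp [Function.iterate_succ_apply']
      rw [h2, ← Function.iterate_add_apply, iter_iter_comm]
    simp_rw [step1]
    refine sum_congr rfl fun j _ => ?_
    have hdeg : ((⇑(pderiv (0:Fin 2)))^[2*j] p).totalDegree < 2*N := by
      have := deg_iter 0 (2*j) p; omega
    rw [telescope 1 N (cc j) _ hdeg]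
    refine sum_congr rfl fun k _ => ?_
    rw [iter_iter_comm, mul_comm (cc k) (cc j)]
  rw [hR, hL1, hL2]
  have : ∀ j ∈ range N, ∀ k ∈ range N, (-(2*(k:ℝ)) * (cc j * cc k)) •
        (⇑(pderiv (0:Fin 2)))^[2*j] ((⇑(pderiv (1:Fin 2)))^[2*k] p)
      = -(((2*(k:ℝ)) * (cc j * cc k)) •
        (⇑(pderiv (0:Fin 2)))^[2*j] ((⇑(pderiv (1:Fin 2)))^[2*k] p)) := by
    intro j _ k _
    rw [neg_mul, neg_smul]
  rw [Finset.sum_congr rfl fun j hj => Finset.sum_congr rfl fun k hk => this j hj k hk]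
  simp only [Finset.sum_neg_distrib]
  ring

lemma exp_eq_FF (p : P2) : expNegHalfLap p = FF (p.totalDegree + 1) p := by
  unfold expNegHalfLap FF cc
  rfl

lemma FF_Cmul (N : ℕ) (a : ℝ) (s : P2) : FF N (C a * s) = C a * FF N s := by
  rw [← smul_eq_C_mul, ← smul_eq_C_mul, FF_smul]

/-- Proposition 3.1 (intertwining form): for every bivariate polynomial `p`,
`𝔇 (E₂ p) = E₂ (𝔇' p)`, where `𝔇 = (x∂x − ∂x²) + (y∂y − ∂y²) − 2β ∂x∂y` and
`𝔇' = x∂x + y∂y − 2β ∂x∂y`. -/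
theorem expNegHalfLap_intertwines (β : ℝ) (p : MvPolynomial (Fin 2) ℝ) :
    X 0 * pderiv 0 (expNegHalfLap p) - pderiv 0 (pderiv 0 (expNegHalfLap p)) +
        X 1 * pderiv 1 (expNegHalfLap p) - pderiv 1 (pderiv 1 (expNegHalfLap p)) -
        C (2 * β) * pderiv 0 (pderiv 1 (expNegHalfLap p)) =
      expNegHalfLap
        (X 0 * pderiv 0 p + X 1 * pderiv 1 p - C (2 * β) * pderiv 0 (pderiv 1 p)) := by
  set q : P2 := X 0 * pderiv 0 p + X 1 * pderiv 1 p - C (2 * β) * pderiv 0 (pderiv 1 p)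
    with hq
  set N := p.totalDegree + q.totalDegree + 2 with hN
  have hpN : p.totalDegree < N := by omega
  have h1 : expNegHalfLap p = FF N p := by
    rw [exp_eq_FF]
    exact (FF_stable (p.totalDegree + 1) N p (by omega) (by omega)).symm
  have h2 : expNegHalfLap q = FF N q := by
    rw [exp_eq_FF]
    exact (FF_stable (q.totalDegree + 1) N q (by omega) (by omega)).symm
  rw [h1, h2, hq]
  simp only [FF_pderiv]
  rw [FF_sub, FF_add, FF_Cmul, ← K1 N p hpN, ← K2 N p hpN]
  ring
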